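/- arXiv:2412.00954 — 7 statements merged into one kernel-verified Lean document; each statement's English description precedes it below -/
import Mathlib

section
/- If a real Banach space X admits an ℓ²-frame, i.e., a family (f_i)_{i∈I} in the continuous dual X', indexed by a countable set I, together with constants 0 < A ≤ B such that A‖v‖² ≤ Σ_{i∈I} |f_i(v)|² ≤ B‖v‖² for all v ∈ X, then X is reflexive and separable. -/
open NormedSpace TopologicalSpace
open scoped ENNReal NNReal

/-- A real Hilbert space is reflexive. -/
lemma hilbert_reflexive {Y : Type*} [NormedAddCommGroup Y] [InnerProductSpace ℝ Y]
    [CompleteSpace Y] : Function.Surjective (inclusionInDoubleDual ℝ Y) := by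
  intro Ψ
  set td := InnerProductSpace.toDual ℝ Y with htd
  let clin : Y →ₗ[ℝ] ℝ :=
    { toFun := fun y => Ψ (td y)
      map_add' := fun a b => by simp [td, map_add]
      map_smul' := fun r a => by
        simp [td, LinearIsometryEquiv.map_smulₛₗ, starRingEnd_apply, star_trivial] }
  have hbound : ∀ y : Y, ‖clin y‖ ≤ ‖Ψ‖ * ‖y‖ := fun y => by
    calc ‖Ψ (td y)‖ ≤ ‖Ψ‖ * ‖td y‖ := Ψ.le_opNorm _
    _ = ‖Ψ‖ * ‖y‖ := by rw [td.norm_map]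
  let c : Y →L[ℝ] ℝ := clin.mkContinuous ‖Ψ‖ hbound
  refine ⟨td.symm c, ?_⟩
  ext g
  have h1 : (inclusionInDoubleDual ℝ Y) (td.symm c) g = g (td.symm c) := rfl
  rw [h1]
  have h2 : g (td.symm c) = inner ℝ ((td.symm : StrongDual ℝ Y → Y) g) (td.symm c) :=
    (InnerProductSpace.toDual_symm_apply).symm
  rw [h2, real_inner_comm]
  have h3 : (inner ℝ ((td.symm : StrongDual ℝ Y → Y) c) ((td.symm : StrongDual ℝ Y → Y) g) : ℝ)
      = c (td.symm g) := InnerProductSpace.toDual_symm_apply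
  rw [h3]
  have h4 : c (td.symm g) = Ψ (td (td.symm g)) := rfl
  rw [h4, td.apply_symm_apply]

/-- Reflexivity transfers along a continuous linear equivalence. -/
lemma reflexive_transfer {X Y : Type*} [NormedAddCommGroup X] [NormedSpace ℝ X]
    [NormedAddCommGroup Y] [NormedSpace ℝ Y] (e : X ≃L[ℝ] Y)
    (h : Function.Surjective (inclusionInDoubleDual ℝ Y)) :
    Function.Surjective (inclusionInDoubleDual ℝ X) := by
  intro Φ
  let P : StrongDual ℝ Y →L[ℝ] StrongDual ℝ X :=
    (ContinuousLinearMap.compL ℝ X Y ℝ).flip (e : X →L[ℝ] Y)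
  obtain ⟨y, hy⟩ := h (Φ.comp P)
  refine ⟨e.symm y, ?_⟩
  ext g
  have hg := DFunLike.congr_fun hy (g.comp (e.symm : Y →L[ℝ] X))
  have hL : (inclusionInDoubleDual ℝ Y y) (g.comp (e.symm : Y →L[ℝ] X))
      = g (e.symm y) := rfl
  have hR : (Φ.comp P) (g.comp (e.symm : Y →L[ℝ] X)) = Φ g := by
    have hPg : P (g.comp (e.symm : Y →L[ℝ] X)) = g := by
      ext x
      simp [P]
    simp [hPg]
  rw [hL, hR] at hg
  have hfin : (inclusionInDoubleDual ℝ X) (e.symm y) g = g (e.symm y) := rfl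
  rw [hfin, hg]

/-- If a real Banach space `X` admits an ℓ²-frame `(f i)_{i ∈ I}` (I countable)
with constants `0 < A ≤ B` such that `A‖v‖² ≤ ∑' i, (f i v)² ≤ B‖v‖²` for all `v`,
then `X` is reflexive (the canonical inclusion into the double dual is surjective)
and separable. -/
theorem stmt0 {X : Type*} [NormedAddCommGroup X] [NormedSpace ℝ X] [CompleteSpace X]
    {I : Type*} [Countable I] (f : I → StrongDual ℝ X) (A B : ℝ)
    (hA : 0 < A) (hAB : A ≤ B)
    (hsum : ∀ v : X, Summable fun i => (f i v) ^ 2)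
    (hlow : ∀ v : X, A * ‖v‖ ^ 2 ≤ ∑' i, (f i v) ^ 2)
    (hup : ∀ v : X, ∑' i, (f i v) ^ 2 ≤ B * ‖v‖ ^ 2) :
    Function.Surjective (NormedSpace.inclusionInDoubleDual ℝ X) ∧
      TopologicalSpace.SeparableSpace X := by
  have hB : 0 < B := lt_of_lt_of_le hA hAB
  classical
  have hp2 : ((2 : ℝ≥0∞)).toReal = 2 := by norm_num
  have hp0 : 0 < ((2 : ℝ≥0∞)).toReal := by rw [hp2]; norm_num
  have hnorm_eq : ∀ (i : I) (v : X), ‖f i v‖ ^ ((2:ℝ≥0∞).toReal) = (f i v) ^ 2 := by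
    intro i v
    rw [hp2, show ((2:ℝ)) = ((2:ℕ):ℝ) by norm_num, Real.rpow_natCast]
    rw [Real.norm_eq_abs, sq_abs]
  have hmem : ∀ v : X, Memℓp (fun i => f i v) 2 := by
    intro v
    apply memℓp_gen
    have heq : (fun i => ‖f i v‖ ^ ((2:ℝ≥0∞)).toReal) = fun i => (f i v) ^ 2 := by
      ext i; exact hnorm_eq i v
    rw [heq]; exact hsum v
  let Tlin : X →ₗ[ℝ] (lp (fun _ : I => ℝ) 2) :=
    { toFun := fun v => ⟨fun i => f i v, hmem v⟩
      map_add' := fun a b => by ext i; simp [lp.coeFn_add]; rfl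
      map_smul' := fun r a => by ext i; simp [lp.coeFn_smul] }
  have hTnormsq : ∀ v : X, ‖Tlin v‖ ^ (2:ℕ) = ∑' i, (f i v) ^ 2 := by
    intro v
    have h1 : ‖Tlin v‖ ^ ((2:ℝ≥0∞)).toReal = ∑' i, ‖(Tlin v) i‖ ^ ((2:ℝ≥0∞)).toReal :=
      lp.norm_rpow_eq_tsum hp0 (Tlin v)
    have h2 : ‖Tlin v‖ ^ ((2:ℝ≥0∞)).toReal = ‖Tlin v‖ ^ (2:ℕ) := by
      rw [hp2, show ((2:ℝ)) = ((2:ℕ):ℝ) by norm_num, Real.rpow_natCast]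
    rw [← h2, h1]
    congr 1
    ext i
    exact hnorm_eq i v
  -- upper bound : continuity
  have hTub : ∀ v : X, ‖Tlin v‖ ≤ Real.sqrt B * ‖v‖ := by
    intro v
    have h2 : ‖Tlin v‖ ^ (2:ℕ) ≤ (Real.sqrt B * ‖v‖) ^ (2:ℕ) := by
      rw [mul_pow, Real.sq_sqrt hB.le, hTnormsq v]
      exact hup v
    have h3 : Real.sqrt (‖Tlin v‖ ^ (2:ℕ)) ≤ Real.sqrt ((Real.sqrt B * ‖v‖) ^ (2:ℕ)) :=
      Real.sqrt_le_sqrt h2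
    rwa [Real.sqrt_sq (norm_nonneg _), Real.sqrt_sq (by positivity)] at h3
  -- lower bound
  have hTlb : ∀ v : X, ‖v‖ ≤ (Real.sqrt A)⁻¹ * ‖Tlin v‖ := by
    intro v
    have h2 : (Real.sqrt A * ‖v‖) ^ (2:ℕ) ≤ ‖Tlin v‖ ^ (2:ℕ) := by
      rw [mul_pow, Real.sq_sqrt hA.le, hTnormsq v]
      exact hlow v
    have h3 : Real.sqrt ((Real.sqrt A * ‖v‖) ^ (2:ℕ)) ≤ Real.sqrt (‖Tlin v‖ ^ (2:ℕ)) :=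
      Real.sqrt_le_sqrt h2
    rw [Real.sqrt_sq (by positivity), Real.sqrt_sq (norm_nonneg _)] at h3
    have hsA : 0 < Real.sqrt A := Real.sqrt_pos.mpr hA
    rw [inv_mul_eq_div, le_div_iff₀ hsA, mul_comm]
    exact h3
  let T : X →L[ℝ] (lp (fun _ : I => ℝ) 2) := Tlin.mkContinuous (Real.sqrt B) hTub
  have hTapp : ∀ v, T v = Tlin v := fun v => rfl
  have hanti : AntilipschitzWith ((Real.sqrt A)⁻¹.toNNReal) T := by
    apply T.antilipschitz_of_bound
    intro v
    rw [Real.coe_toNNReal _ (by positivity)]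
    exact hTlb v
  have hinj : Function.Injective T := hanti.injective
  -- range of T
  let Y : Submodule ℝ (lp (fun _ : I => ℝ) 2) := LinearMap.range (T : X →ₗ[ℝ] (lp (fun _ : I => ℝ) 2))
  have hYclosed : IsClosed (Y : Set (lp (fun _ : I => ℝ) 2)) := by
    have hYr : (Y : Set (lp (fun _ : I => ℝ) 2)) = Set.range T := by
      ext x; simp [Y, LinearMap.mem_range]
    rw [hYr]
    exact hanti.isClosed_range T.uniformContinuous
  haveI : CompleteSpace Y := hYclosed.completeSpace_coe
  let T' : X →L[ℝ] Y := T.codRestrict Y (fun v => LinearMap.mem_range_self _ v)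
  have hker : LinearMap.ker (T' : X →ₗ[ℝ] Y) = ⊥ := by
    rw [ContinuousLinearMap.ker_codRestrict]
    exact LinearMap.ker_eq_bot.mpr hinj
  have hrange : LinearMap.range (T' : X →ₗ[ℝ] Y) = ⊤ := by
    rw [LinearMap.range_eq_top]
    rintro ⟨y, hy⟩
    obtain ⟨x, hx⟩ := LinearMap.mem_range.mp hy
    exact ⟨x, Subtype.ext hx⟩
  let e : X ≃L[ℝ] Y := ContinuousLinearEquiv.ofBijective T' hker hrange
  constructor
  · exact reflexive_transfer e hilbert_reflexive
  · -- separability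
    haveI : SeparableSpace (lp (fun _ : I => ℝ) 2) := by
      have hsep : IsSeparable (Set.range (fun i : I => lp.single 2 i (1:ℝ)) : Set (lp (fun _ : I => ℝ) 2)) :=
        (Set.countable_range _).isSeparable
      have hspan := hsep.span (R := ℝ)
      have hdense : Dense (Submodule.span ℝ
          (Set.range (fun i : I => lp.single 2 i (1:ℝ))) : Set (lp (fun _ : I => ℝ) 2)) := by
        rw [dense_iff_closure_eq, Set.eq_univ_iff_forall]
        intro g
        have hg : HasSum (fun i : I => lp.single 2 i (g i : ℝ)) g :=
          lp.hasSum_single (by norm_num) g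
        refine mem_closure_of_tendsto hg ?_
        filter_upwards with s
        apply Submodule.sum_mem
        intro i _
        have hsm : lp.single 2 i (g i : ℝ) =
            (g i) • (lp.single 2 i (1:ℝ) : lp (fun _ : I => ℝ) 2) := by
          rw [← lp.single_smul]
          norm_num
        rw [hsm]
        exact Submodule.smul_mem _ _ (Submodule.subset_span (Set.mem_range_self i))
      have huniv : IsSeparable (Set.univ : Set (lp (fun _ : I => ℝ) 2)) := by
        have hcl := hspan.closure
        rwa [hdense.closure_eq] at hcl
      exact (isSeparable_univ_iff).mp huniv
    haveI : SecondCountableTopology (lp (fun _ : I => ℝ) 2) :=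
      UniformSpace.secondCountable_of_separable (lp (fun _ : I => ℝ) 2)
    haveI : SecondCountableTopology Y := inferInstance
    haveI : SecondCountableTopology X := e.toHomeomorph.secondCountableTopology
    exact SecondCountableTopology.to_separableSpace
end

section
/- Let (f_i)_{i∈I} be an ℓ²-frame for a real Banach space X with bounds 0 < A ≤ B. Then for every v ∈ X the series Σ_{i∈I} f_i(v)·f_i converges in the norm of X' to an element Sv ∈ X', the resulting frame operator S : X → X' is a bounded linear map, S is symmetric in the sense that (Su)(v) = (Sv)(u) for all u, v ∈ X, and S is uniformly elliptic and continuous: A‖u‖² ≤ (Su)(u) ≤ B‖u‖² for all u ∈ X. -/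
section aux

variable {X : Type*} [NormedAddCommGroup X] [NormedSpace ℝ X]
variable {I : Type*}

/-- Cauchy–Schwarz with absolute value, finset version. -/
lemma abs_sum_mul_le_sqrt (t : Finset I) (a b : I → ℝ) :
    |∑ i ∈ t, a i * b i| ≤
      Real.sqrt (∑ i ∈ t, a i ^ 2) * Real.sqrt (∑ i ∈ t, b i ^ 2) := by
  rw [abs_le]
  constructor
  · have h := Real.sum_mul_le_sqrt_mul_sqrt t (fun i => -a i) b
    have e1 : ∑ i ∈ t, -a i * b i = -∑ i ∈ t, a i * b i := by
      rw [← Finset.sum_neg_distrib]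
      exact Finset.sum_congr rfl fun i _ => by ring
    have e2 : ∑ i ∈ t, (-a i) ^ 2 = ∑ i ∈ t, a i ^ 2 :=
      Finset.sum_congr rfl fun i _ => by ring
    rw [e1, e2] at h
    linarith
  · exact Real.sum_mul_le_sqrt_mul_sqrt t a b

/-- Norm bound for finite partial sums of the frame series. -/
lemma partial_sum_norm_le (f : I → StrongDual ℝ X) (B : ℝ) (hB : 0 ≤ B)
    (hup : ∀ v : X, ∑' i, (f i v) ^ 2 ≤ B * ‖v‖ ^ 2)
    (hsum : ∀ v : X, Summable fun i => (f i v) ^ 2)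
    (v : X) (t : Finset I) :
    ‖∑ i ∈ t, f i v • f i‖ ≤ Real.sqrt (∑ i ∈ t, (f i v) ^ 2) * Real.sqrt B := by
  apply ContinuousLinearMap.opNorm_le_bound
  · positivity
  intro u
  have hev : (∑ i ∈ t, f i v • f i) u = ∑ i ∈ t, f i v * f i u := by
    simp [ContinuousLinearMap.sum_apply, smul_eq_mul]
  rw [hev, Real.norm_eq_abs]
  refine le_trans (abs_sum_mul_le_sqrt t _ _) ?_
  have h1 : ∑ i ∈ t, (f i u) ^ 2 ≤ B * ‖u‖ ^ 2 :=
    le_trans (Summable.sum_le_tsum t (fun i _ => sq_nonneg _) (hsum u)) (hup u)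
  have h2 : Real.sqrt (∑ i ∈ t, (f i u) ^ 2) ≤ Real.sqrt B * ‖u‖ := by
    rw [← Real.sqrt_sq (norm_nonneg u), ← Real.sqrt_mul hB]
    · exact Real.sqrt_le_sqrt (by simpa using h1)
  calc Real.sqrt (∑ i ∈ t, (f i v) ^ 2) * Real.sqrt (∑ i ∈ t, (f i u) ^ 2)
      ≤ Real.sqrt (∑ i ∈ t, (f i v) ^ 2) * (Real.sqrt B * ‖u‖) := by
        apply mul_le_mul_of_nonneg_left h2 (Real.sqrt_nonneg _)
    _ = Real.sqrt (∑ i ∈ t, (f i v) ^ 2) * Real.sqrt B * ‖u‖ := by ring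

end aux

/-- For an ℓ²-frame `(f i)_{i ∈ I}` of a real Banach space `X` with bounds
`0 < A ≤ B`, the series `∑ i, f i v • f i` converges in the dual norm to `S v`, where the
frame operator `S : X → X'` is a bounded linear map; `S` is symmetric, i.e.
`(S u) v = (S v) u`, and uniformly elliptic and continuous: `A‖u‖² ≤ (S u) u ≤ B‖u‖²`. -/
theorem stmt1 {X : Type*} [NormedAddCommGroup X] [NormedSpace ℝ X] [CompleteSpace X]
    {I : Type*} [Countable I] (f : I → StrongDual ℝ X) (A B : ℝ)
    (hA : 0 < A) (hAB : A ≤ B)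
    (hsum : ∀ v : X, Summable fun i => (f i v) ^ 2)
    (hlow : ∀ v : X, A * ‖v‖ ^ 2 ≤ ∑' i, (f i v) ^ 2)
    (hup : ∀ v : X, ∑' i, (f i v) ^ 2 ≤ B * ‖v‖ ^ 2) :
    ∃ S : X →L[ℝ] StrongDual ℝ X,
      (∀ v : X, HasSum (fun i => f i v • f i) (S v)) ∧
      (∀ u v : X, S u v = S v u) ∧
      (∀ u : X, A * ‖u‖ ^ 2 ≤ S u u ∧ S u u ≤ B * ‖u‖ ^ 2) := by
  classical
  have hB : (0:ℝ) ≤ B := le_of_lt (lt_of_lt_of_le hA hAB)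
  -- summability of the frame series in the dual
  have hsummable : ∀ v : X, Summable (fun i => f i v • f i) := by
    intro v
    rw [summable_iff_vanishing_norm]
    intro ε hε
    by_cases hBz : Real.sqrt B = 0
    · refine ⟨∅, fun t _ => ?_⟩
      calc ‖∑ i ∈ t, f i v • f i‖
          ≤ Real.sqrt (∑ i ∈ t, (f i v) ^ 2) * Real.sqrt B :=
            partial_sum_norm_le f B hB hup hsum v t
        _ = 0 := by rw [hBz, mul_zero]
        _ < ε := hε
    · have hBpos : 0 < Real.sqrt B := lt_of_le_of_ne (Real.sqrt_nonneg B) (Ne.symm hBz)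
      have hδ : (0:ℝ) < (ε / Real.sqrt B) ^ 2 / 2 := by positivity
      obtain ⟨s, hs⟩ := summable_iff_vanishing_norm.1 (hsum v) _ hδ
      refine ⟨s, fun t ht => ?_⟩
      have h1 : ‖∑ i ∈ t, (f i v) ^ 2‖ < (ε / Real.sqrt B) ^ 2 / 2 := hs t ht
      have h2 : ∑ i ∈ t, (f i v) ^ 2 < (ε / Real.sqrt B) ^ 2 := by
        have : |∑ i ∈ t, (f i v) ^ 2| < (ε / Real.sqrt B) ^ 2 / 2 := by
          simpa [Real.norm_eq_abs] using h1
        nlinarith [abs_nonneg (∑ i ∈ t, (f i v) ^ 2),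
          le_abs_self (∑ i ∈ t, (f i v) ^ 2)]
      have h3 : Real.sqrt (∑ i ∈ t, (f i v) ^ 2) < ε / Real.sqrt B := by
        have hεB : 0 < ε / Real.sqrt B := by positivity
        calc Real.sqrt (∑ i ∈ t, (f i v) ^ 2)
            < Real.sqrt ((ε / Real.sqrt B) ^ 2) := by
              apply Real.sqrt_lt_sqrt (Finset.sum_nonneg fun i _ => sq_nonneg _) h2
          _ = ε / Real.sqrt B := Real.sqrt_sq hεB.le
      calc ‖∑ i ∈ t, f i v • f i‖
          ≤ Real.sqrt (∑ i ∈ t, (f i v) ^ 2) * Real.sqrt B :=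
            partial_sum_norm_le f B hB hup hsum v t
        _ < (ε / Real.sqrt B) * Real.sqrt B := by
            exact mul_lt_mul_of_pos_right h3 hBpos
        _ = ε := by field_simp
  -- the (nonlinear, for now) frame map
  set g : X → StrongDual ℝ X := fun v => ∑' i, f i v • f i with hg
  have hgsum : ∀ v : X, HasSum (fun i => f i v • f i) (g v) := fun v =>
    (hsummable v).hasSum
  -- pointwise evaluation
  have hgev : ∀ v u : X, HasSum (fun i => f i v * f i u) (g v u) := by
    intro v u
    have := (ContinuousLinearMap.apply ℝ ℝ u).hasSum (hgsum v)
    simpa [smul_eq_mul] using this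
  -- symmetry
  have hsymm : ∀ u v : X, g u v = g v u := by
    intro u v
    have h1 : HasSum (fun i => f i u * f i v) (g u v) := hgev u v
    have h2 : HasSum (fun i => f i u * f i v) (g v u) := by
      have := hgev v u
      simpa [mul_comm] using this
    exact h1.unique h2
  -- diagonal values
  have hdiag : ∀ u : X, g u u = ∑' i, (f i u) ^ 2 := by
    intro u
    have h1 : HasSum (fun i => (f i u) ^ 2) (g u u) := by
      have := hgev u u
      simpa [sq] using this
    exact h1.tsum_eq.symm
  -- linearity
  have hadd : ∀ u v : X, g (u + v) = g u + g v := by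
    intro u v
    have h1 : HasSum (fun i => f i (u + v) • f i) (g u + g v) := by
      have := (hgsum u).add (hgsum v)
      convert this using 2 with i
      simp [map_add, add_smul]
    exact h1.tsum_eq
  have hsmul : ∀ (c : ℝ) (v : X), g (c • v) = c • g v := by
    intro c v
    have h1 : HasSum (fun i => f i (c • v) • f i) (c • g v) := by
      have := (hgsum v).const_smul c
      convert this using 2 with i
      simp [map_smul, smul_smul]
    exact h1.tsum_eq
  -- norm bound
  have hbound : ∀ v : X, ‖g v‖ ≤ B * ‖v‖ := by
    intro v
    apply ContinuousLinearMap.opNorm_le_bound _ (by positivity)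
    intro u
    rw [Real.norm_eq_abs]
    have hten : Filter.Tendsto (fun t : Finset I => ∑ i ∈ t, f i v * f i u)
        Filter.atTop (nhds (g v u)) := hgev v u
    have habs : Filter.Tendsto (fun t : Finset I => |∑ i ∈ t, f i v * f i u|)
        Filter.atTop (nhds |g v u|) := hten.abs
    refine le_of_tendsto habs (Filter.Eventually.of_forall fun t => ?_)
    have h1 : ∑ i ∈ t, (f i v) ^ 2 ≤ B * ‖v‖ ^ 2 :=
      le_trans (Summable.sum_le_tsum t (fun i _ => sq_nonneg _) (hsum v)) (hup v)
    have h2 : ∑ i ∈ t, (f i u) ^ 2 ≤ B * ‖u‖ ^ 2 :=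
      le_trans (Summable.sum_le_tsum t (fun i _ => sq_nonneg _) (hsum u)) (hup u)
    have hsv : Real.sqrt (∑ i ∈ t, (f i v) ^ 2) ≤ Real.sqrt B * ‖v‖ := by
      rw [← Real.sqrt_sq (norm_nonneg v), ← Real.sqrt_mul hB]
      exact Real.sqrt_le_sqrt (by simpa using h1)
    have hsu : Real.sqrt (∑ i ∈ t, (f i u) ^ 2) ≤ Real.sqrt B * ‖u‖ := by
      rw [← Real.sqrt_sq (norm_nonneg u), ← Real.sqrt_mul hB]
      exact Real.sqrt_le_sqrt (by simpa using h2)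
    calc |∑ i ∈ t, f i v * f i u|
        ≤ Real.sqrt (∑ i ∈ t, (f i v) ^ 2) * Real.sqrt (∑ i ∈ t, (f i u) ^ 2) :=
          abs_sum_mul_le_sqrt t _ _
      _ ≤ (Real.sqrt B * ‖v‖) * (Real.sqrt B * ‖u‖) := by
          apply mul_le_mul hsv hsu (Real.sqrt_nonneg _) (by positivity)
      _ = Real.sqrt B * Real.sqrt B * ‖v‖ * ‖u‖ := by ring
      _ = B * ‖v‖ * ‖u‖ := by rw [Real.mul_self_sqrt hB]
  -- assemble the continuous linear map
  let Slin : X →ₗ[ℝ] StrongDual ℝ X :=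
    { toFun := g
      map_add' := hadd
      map_smul' := hsmul }
  let S : X →L[ℝ] StrongDual ℝ X := Slin.mkContinuous B hbound
  refine ⟨S, fun v => hgsum v, fun u v => hsymm u v, fun u => ?_⟩
  have hS : S u u = g u u := rfl
  rw [hS, hdiag u]
  exact ⟨hlow u, hup u⟩
end

section
/- Let (f_i)_{i∈I} be an ℓ²-frame for a real Banach space X with bounds 0 < A ≤ B and let S : X → X' be the frame operator. Then S is bijective with bounded inverse S⁻¹ : X' → X, and (1/B)‖u'‖² ≤ u'(S⁻¹u') ≤ (1/A)‖u'‖² holds for every u' ∈ X', where ‖u'‖ denotes the dual norm on X'. -/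
open Filter Topology

private lemma quadCS {a b c : ℝ} (ha : 0 < a) (h : ∀ t : ℝ, 0 ≤ c + 2*b*t + a*t^2) :
    b^2 ≤ a * c := by
  have h0 := h (-b/a)
  have e : c + 2*b*(-b/a) + a*(-b/a)^2 = (a*c - b^2)/a := by field_simp; ring
  rw [e] at h0
  rcases div_nonneg_iff.mp h0 with ⟨h1, _⟩ | ⟨_, h2⟩
  · linarith
  · linarith

set_option maxHeartbeats 1600000 in
/-- For an ℓ²-frame `(f i)_{i ∈ I}` of a real Banach space `X` with bounds
`0 < A ≤ B` and frame operator `S : X → X'` (given by `S v = ∑ i, f i v • f i`), the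
operator `S` is bijective with a bounded inverse `S⁻¹ : X' → X`, and
`(1/B)‖u'‖² ≤ u'(S⁻¹ u') ≤ (1/A)‖u'‖²` for every `u' ∈ X'` (dual norm on `X'`). -/
theorem stmt2 {X : Type*} [NormedAddCommGroup X] [NormedSpace ℝ X] [CompleteSpace X]
    {I : Type*} [Countable I] (f : I → StrongDual ℝ X) (A B : ℝ)
    (hA : 0 < A) (hAB : A ≤ B)
    (hsum : ∀ v : X, Summable fun i => (f i v) ^ 2)
    (hlow : ∀ v : X, A * ‖v‖ ^ 2 ≤ ∑' i, (f i v) ^ 2)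
    (hup : ∀ v : X, ∑' i, (f i v) ^ 2 ≤ B * ‖v‖ ^ 2)
    (S : X →L[ℝ] StrongDual ℝ X)
    (hS : ∀ v : X, HasSum (fun i => f i v • f i) (S v)) :
    ∃ Sinv : StrongDual ℝ X →L[ℝ] X,
      (∀ v : X, Sinv (S v) = v) ∧
      (∀ u' : StrongDual ℝ X, S (Sinv u') = u') ∧
      (∀ u' : StrongDual ℝ X,
        (1 / B) * ‖u'‖ ^ 2 ≤ u' (Sinv u') ∧ u' (Sinv u') ≤ (1 / A) * ‖u'‖ ^ 2) := by
  have hB : (0:ℝ) < B := lt_of_lt_of_le hA hAB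
  -- basic identities
  have hSvw : ∀ v w : X, HasSum (fun i => f i v * f i w) (S v w) := by
    intro v w
    have := (hS v).mapL (ContinuousLinearMap.apply ℝ ℝ w)
    simpa [ContinuousLinearMap.smul_apply, smul_eq_mul] using this
  have hsym : ∀ v w : X, S v w = S w v := by
    intro v w
    exact (hSvw v w).unique (by simpa [mul_comm] using hSvw w v)
  have hSvv : ∀ v : X, S v v = ∑' i, (f i v)^2 := by
    intro v
    rw [← (hSvw v v).tsum_eq]
    simp [pow_two]
  have hlow' : ∀ v : X, A * ‖v‖^2 ≤ S v v := fun v => (hSvv v) ▸ hlow v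
  have hup' : ∀ v : X, S v v ≤ B * ‖v‖^2 := fun v => (hSvv v) ▸ hup v
  -- expansion identities
  have hexp : ∀ (v w : X) (t : ℝ),
      S (v + t•w) (v + t•w) = S v v + 2*(S v w)*t + (S w w)*t^2 := by
    intro v w t
    rw [map_add, map_smul]
    simp only [ContinuousLinearMap.add_apply, ContinuousLinearMap.smul_apply, map_add,
      map_smul, smul_eq_mul, hsym w v]
    ring
  have hmid : ∀ p q : X,
      2 * S ((1/2:ℝ)•(p+q)) ((1/2:ℝ)•(p+q)) + (1/2) * S (p-q) (p-q)
        = S p p + S q q := by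
    intro p q
    rw [map_smul, map_add, map_sub]
    simp only [ContinuousLinearMap.add_apply, ContinuousLinearMap.smul_apply,
      ContinuousLinearMap.sub_apply, map_add, map_sub, map_smul, smul_eq_mul, hsym q p]
    ring
  -- Cauchy-Schwarz for the bilinear form
  have hCS : ∀ v w : X, (S v w)^2 ≤ S v v * S w w := by
    intro v w
    rcases eq_or_ne w 0 with rfl | hw
    · simp
    · have hw' : 0 < ‖w‖ := norm_pos_iff.mpr hw
      have haw : 0 < S w w := lt_of_lt_of_le (by positivity) (hlow' w)
      have hq : ∀ t : ℝ, 0 ≤ S v v + 2*(S v w)*t + (S w w)*t^2 := by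
        intro t
        have h1 := hlow' (v + t•w)
        have h2 := hexp v w t
        nlinarith [sq_nonneg ‖v + t•w‖]
      have h := quadCS haw hq
      linarith [h, mul_comm (S w w) (S v v)]
  -- lower bound for the operator norm of S v, and injectivity
  have hSnorm : ∀ v : X, A * ‖v‖ ≤ ‖S v‖ := by
    intro v
    rcases eq_or_ne v 0 with rfl | hv
    · simp
    · have hv' : 0 < ‖v‖ := norm_pos_iff.mpr hv
      have h1 : S v v ≤ ‖S v‖ * ‖v‖ := le_trans (Real.le_norm_self _) ((S v).le_opNorm v)
      have h2 := hlow' v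
      have : A * ‖v‖ * ‖v‖ ≤ ‖S v‖ * ‖v‖ := by nlinarith
      exact le_of_mul_le_mul_right this hv'
  -- ‖S v‖^2 ≤ B * S v v
  have hSnormsq : ∀ v : X, ‖S v‖^2 ≤ B * S v v := by
    intro v
    have hvv : 0 ≤ S v v := le_trans (by positivity) (hlow' v)
    have hbound : ‖S v‖ ≤ Real.sqrt (B * S v v) := by
      refine (S v).opNorm_le_bound (Real.sqrt_nonneg _) (fun w => ?_)
      have h1 : (S v w)^2 ≤ (B * S v v) * ‖w‖^2 := by
        have := hCS v w
        have := hup' w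
        nlinarith
      have h2 : ‖S v w‖ = Real.sqrt ((S v w)^2) := by
        rw [Real.sqrt_sq_eq_abs, Real.norm_eq_abs]
      rw [h2]
      calc Real.sqrt ((S v w)^2) ≤ Real.sqrt ((B * S v v) * ‖w‖^2) :=
            Real.sqrt_le_sqrt h1
        _ = Real.sqrt (B * S v v) * ‖w‖ := by
            rw [Real.sqrt_mul (by positivity), Real.sqrt_sq (norm_nonneg w)]
    calc ‖S v‖^2 ≤ (Real.sqrt (B * S v v))^2 := by
          apply sq_le_sq' _ hbound
          linarith [norm_nonneg (S v), Real.sqrt_nonneg (B * S v v)]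
      _ = B * S v v := Real.sq_sqrt (by positivity)
  -- surjectivity via minimization
  have hsurj : ∀ u' : StrongDual ℝ X, ∃ v, S v = u' := by
    intro u'
    set F : X → ℝ := fun v => (1/2) * S v v - u' v with hF
    have hFcont : Continuous F := by
      have h1 : Continuous fun v : X => S v v :=
        isBoundedBilinearMap_apply.continuous.comp (S.continuous.prodMk continuous_id)
      exact (continuous_const.mul h1).sub u'.continuous
    have h2A : (0:ℝ) < 2*A := by positivity
    have hFlb : ∀ v, -(‖u'‖^2/(2*A)) ≤ F v := by
      intro v
      have h1 := hlow' v
      have h2 : u' v ≤ ‖u'‖ * ‖v‖ := le_trans (Real.le_norm_self _) (u'.le_opNorm v)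
      simp only [hF]
      have key : (-‖u'‖^2)/(2*A) ≤ 1/2 * (S v v) - u' v := by
        rw [div_le_iff₀ h2A]
        nlinarith [sq_nonneg (A*‖v‖ - ‖u'‖), norm_nonneg v, norm_nonneg u',
          mul_le_mul_of_nonneg_left h2 h2A.le]
      calc -(‖u'‖^2/(2*A)) = (-‖u'‖^2)/(2*A) := by ring
        _ ≤ _ := key
    have hne : (Set.range F).Nonempty := ⟨F 0, 0, rfl⟩
    have hbdd : BddBelow (Set.range F) :=
      ⟨-(‖u'‖^2/(2*A)), by rintro x ⟨v, rfl⟩; exact hFlb v⟩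
    set d := sInf (Set.range F) with hd
    have hdle : ∀ v, d ≤ F v := fun v => csInf_le hbdd ⟨v, rfl⟩
    have hseq : ∀ n : ℕ, ∃ w : X, F w < d + 1/(n+1) := by
      intro n
      obtain ⟨x, ⟨w, rfl⟩, hx⟩ := Real.lt_sInf_add_pos hne
        (by positivity : (0:ℝ) < 1/((n:ℝ)+1))
      exact ⟨w, hx⟩
    choose v hv using hseq
    have hkey : ∀ p q : X, A/4 * ‖p - q‖^2 ≤ F p + F q - 2*d := by
      intro p q
      have h1 := hdle ((1/2:ℝ) • (p + q))
      have h2 := hmid p q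
      have h3 := hlow' (p - q)
      have h4 : u' ((1/2:ℝ) • (p + q)) = (1/2) * (u' p + u' q) := by
        rw [map_smul, map_add]; simp [smul_eq_mul]
      simp only [hF] at h1 ⊢
      rw [h4] at h1
      nlinarith
    have hcauchy : CauchySeq v := by
      refine cauchySeq_of_le_tendsto_0 (fun n => Real.sqrt (8/(A*(n+1))))
        (fun n m N hn hm => ?_) ?_
      · have h1 := hkey (v n) (v m)
        have h2 := hv n
        have h3 := hv m
        have hN1 : (0:ℝ) < (N:ℝ)+1 := by positivity
        have hnN : (1:ℝ)/(n+1) ≤ 1/(N+1) := by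
          apply one_div_le_one_div_of_le hN1
          have : (N:ℝ) ≤ n := Nat.cast_le.mpr hn
          linarith
        have hmN : (1:ℝ)/(m+1) ≤ 1/(N+1) := by
          apply one_div_le_one_div_of_le hN1
          have : (N:ℝ) ≤ m := Nat.cast_le.mpr hm
          linarith
        have hb : ‖v n - v m‖^2 ≤ 8/(A*(N+1)) := by
          have hAN : (0:ℝ) < A*((N:ℝ)+1) := by positivity
          rw [le_div_iff₀ hAN]
          have h5 : A/4 * ‖v n - v m‖^2 ≤ 2*(1/((N:ℝ)+1)) := by linarith
          have e : (1/((N:ℝ)+1)) * ((N:ℝ)+1) = 1 := by field_simp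
          nlinarith [mul_le_mul_of_nonneg_right h5 hN1.le, sq_nonneg ‖v n - v m‖]
        rw [dist_eq_norm]
        exact (Real.le_sqrt (norm_nonneg _) (by positivity)).mpr hb
      · have t0 : Tendsto (fun n:ℕ => 8/(A*((n:ℝ)+1))) atTop (𝓝 0) := by
          have := tendsto_one_div_add_atTop_nhds_zero_nat.const_mul (8/A)
          simp only [mul_zero] at this
          refine this.congr fun n => ?_
          field_simp
        have h := (Real.continuous_sqrt.tendsto 0).comp t0
        rw [Real.sqrt_zero] at h
        exact h
    obtain ⟨m, hm⟩ := cauchySeq_tendsto_of_complete hcauchy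
    have hFm : F m = d := by
      have h1 : Tendsto (fun n => F (v n)) atTop (𝓝 (F m)) := (hFcont.tendsto m).comp hm
      have h2 : Tendsto (fun n => F (v n)) atTop (𝓝 d) := by
        refine tendsto_of_tendsto_of_tendsto_of_le_of_le tendsto_const_nhds ?_
          (fun n => hdle (v n)) (fun n => (hv n).le)
        have h3 : Tendsto (fun n : ℕ => d + 1/((n:ℝ)+1)) atTop (𝓝 (d + 0)) :=
          Tendsto.add tendsto_const_nhds tendsto_one_div_add_atTop_nhds_zero_nat
        simpa using h3
      exact tendsto_nhds_unique h1 h2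
    refine ⟨m, ContinuousLinearMap.ext fun w => ?_⟩
    rcases eq_or_ne w 0 with rfl | hw
    · simp
    · have hw' : 0 < ‖w‖ := norm_pos_iff.mpr hw
      have haw : 0 < S w w := lt_of_lt_of_le (by positivity) (hlow' w)
      have hquad : ∀ t : ℝ, 0 ≤ 0 + 2*((S m w - u' w)/2)*t + ((1/2)*S w w)*t^2 := by
        intro t
        have h1 := hdle (m + t•w)
        have h2 : F (m + t•w) = F m + (S m w - u' w)*t + (1/2)*(S w w)*t^2 := by
          simp only [hF]
          rw [hexp m w t, map_add, map_smul]
          simp only [smul_eq_mul]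
          ring
        rw [hFm] at h2
        linarith [h1.trans_eq h2]
      have hb2 := quadCS (by positivity : (0:ℝ) < (1/2)*S w w) hquad
      have : ((S m w - u' w)/2)^2 ≤ 0 := by simpa using hb2
      nlinarith [sq_nonneg ((S m w - u' w)/2)]
  -- bijectivity and the continuous inverse
  have hker : S.ker = ⊥ := by
    rw [LinearMap.ker_eq_bot']
    intro v hv0
    have h1 := hSnorm v
    have : ‖S v‖ = 0 := by
      rw [show S v = 0 from hv0]; simp
    have h2 : ‖v‖ = 0 := by
      have := norm_nonneg v
      nlinarith
    exact norm_eq_zero.mp h2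
  have hrange : S.range = ⊤ := by
    rw [LinearMap.range_eq_top]
    intro u'
    exact hsurj u'
  let e := ContinuousLinearEquiv.ofBijective S hker hrange
  refine ⟨e.symm.toContinuousLinearMap, ?_, ?_, ?_⟩
  · intro v
    exact e.symm_apply_apply v
  · intro u'
    exact e.apply_symm_apply u'
  · intro u'
    set w : X := e.symm u' with hw
    have hSw : S w = u' := e.apply_symm_apply u'
    have heval : u' (e.symm.toContinuousLinearMap u') = S w w := by
      show u' w = S w w
      rw [← hSw]
    constructor
    · -- (1/B) ‖u'‖^2 ≤ S w w
      rw [heval, ← hSw]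
      have h1 := hSnormsq w
      rw [div_mul_eq_mul_div, div_le_iff₀ hB]
      linarith
    · -- S w w ≤ (1/A) ‖u'‖^2
      rw [heval, ← hSw]
      have h1 := hSnorm w
      have h2 : S w w ≤ ‖S w‖ * ‖w‖ := le_trans (Real.le_norm_self _) ((S w).le_opNorm w)
      have h3 : 0 ≤ ‖S w‖ := norm_nonneg _
      rw [div_mul_eq_mul_div, le_div_iff₀ hA]
      nlinarith [norm_nonneg w]
end

section
/- Let (f_i)_{i∈I} be an ℓ²-frame for a real Banach space X with bounds 0 < A ≤ B, let S : X → X' be the frame operator, and assume S is bijective with bounded inverse S⁻¹ : X' → X. Then the canonical dual frame (S⁻¹f_i)_{i∈I} ⊂ X satisfies the frame inequalities for X': (1/B)‖u'‖² ≤ Σ_{i∈I} |u'(S⁻¹f_i)|² ≤ (1/A)‖u'‖² for every u' ∈ X', where ‖u'‖ denotes the dual norm on X'. -/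
lemma rpow_two_abs (x : ℝ) : |x| ^ (2:ℝ) = x ^ 2 := by
  rw [show (2:ℝ) = ((2:ℕ):ℝ) by norm_num, Real.rpow_natCast, sq_abs]

lemma tsum_cs {ι : Type*} (a b : ι → ℝ) (ha : Summable fun i => a i ^ 2)
    (hb : Summable fun i => b i ^ 2) :
    Summable (fun i => a i * b i) ∧
      |∑' i, a i * b i| ≤ Real.sqrt (∑' i, a i ^ 2) * Real.sqrt (∑' i, b i ^ 2) := by
  have hpq : (2:ℝ).HolderConjugate 2 := ⟨by norm_num, by norm_num, by norm_num⟩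
  have ha' : Summable fun i => |a i| ^ (2:ℝ) := by simpa [rpow_two_abs] using ha
  have hb' : Summable fun i => |b i| ^ (2:ℝ) := by simpa [rpow_two_abs] using hb
  obtain ⟨hs, hle⟩ := Real.summable_and_inner_le_Lp_mul_Lq_tsum_of_nonneg hpq
    (fun i => abs_nonneg (a i)) (fun i => abs_nonneg (b i)) ha' hb'
  have hsab : Summable fun i => |a i * b i| := by simpa [abs_mul] using hs
  refine ⟨hsab.of_abs, ?_⟩
  have h1 : |∑' i, a i * b i| ≤ ∑' i, |a i * b i| := by
    simpa [abs_mul] using norm_tsum_le_tsum_norm (f := fun i => a i * b i)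
      (by simpa [abs_mul] using hsab)
  have h2 : ∑' i, |a i * b i| ≤ Real.sqrt (∑' i, a i ^ 2) * Real.sqrt (∑' i, b i ^ 2) := by
    have := hle
    simp only [rpow_two_abs] at this
    calc ∑' i, |a i * b i| = ∑' i, |a i| * |b i| := by simp [abs_mul]
      _ ≤ (∑' i, a i ^ 2) ^ ((1:ℝ)/2) * (∑' i, b i ^ 2) ^ ((1:ℝ)/2) := this
      _ = _ := by rw [Real.sqrt_eq_rpow, Real.sqrt_eq_rpow]
  linarith


/-- For an ℓ²-frame `(f i)` of `X` with bounds `0 < A ≤ B`, frame operator `S`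
(bijective with bounded inverse `Sinv`), the canonical dual frame `(Sinv (f i))_{i ∈ I} ⊂ X`
satisfies the frame inequalities for `X'`:
`(1/B)‖u'‖² ≤ ∑' i, (u' (Sinv (f i)))² ≤ (1/A)‖u'‖²` for all `u' ∈ X'`. -/
theorem stmt3 {X : Type*} [NormedAddCommGroup X] [NormedSpace ℝ X] [CompleteSpace X]
    {I : Type*} [Countable I] (f : I → StrongDual ℝ X) (A B : ℝ)
    (hA : 0 < A) (hAB : A ≤ B)
    (hsum : ∀ v : X, Summable fun i => (f i v) ^ 2)
    (hlow : ∀ v : X, A * ‖v‖ ^ 2 ≤ ∑' i, (f i v) ^ 2)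
    (hup : ∀ v : X, ∑' i, (f i v) ^ 2 ≤ B * ‖v‖ ^ 2)
    (S : X →L[ℝ] StrongDual ℝ X)
    (hS : ∀ v : X, HasSum (fun i => f i v • f i) (S v))
    (Sinv : StrongDual ℝ X →L[ℝ] X)
    (hleft : ∀ v : X, Sinv (S v) = v)
    (hright : ∀ u' : StrongDual ℝ X, S (Sinv u') = u') :
    ∀ u' : StrongDual ℝ X,
      Summable (fun i => (u' (Sinv (f i))) ^ 2) ∧
      (1 / B) * ‖u'‖ ^ 2 ≤ ∑' i, (u' (Sinv (f i))) ^ 2 ∧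
      ∑' i, (u' (Sinv (f i))) ^ 2 ≤ (1 / A) * ‖u'‖ ^ 2 := by
  have hB : 0 < B := lt_of_lt_of_le hA hAB
  -- evaluation of the frame operator
  have hev : ∀ w x : X, HasSum (fun i => f i w * f i x) (S w x) := by
    intro w x
    have := (hS w).mapL (ContinuousLinearMap.apply ℝ ℝ x)
    simpa using this
  have hsym : ∀ w x : X, S w x = S x w := by
    intro w x
    have h1 := (hev w x).tsum_eq
    have h2 := (hev x w).tsum_eq
    rw [← h1, ← h2]
    exact tsum_congr fun i => mul_comm _ _
  intro u'
  set v := Sinv u' with hv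
  have key : ∀ i, u' (Sinv (f i)) = f i v := by
    intro i
    conv_lhs => rw [← hright u']
    rw [show S (Sinv u') (Sinv (f i)) = S v (Sinv (f i)) from rfl, hsym, hright]
  simp only [key]
  have hu'v : u' v = ∑' i, (f i v) ^ 2 := by
    have h1 := (hev v v).tsum_eq
    conv_lhs => rw [← hright u']
    rw [show S (Sinv u') v = S v v from rfl, ← h1]
    exact tsum_congr fun i => (sq (f i v)).symm
  refine ⟨hsum v, ?_, ?_⟩
  · -- lower bound: ‖u'‖² ≤ B * T
    set T := ∑' i, (f i v) ^ 2 with hT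
    have hT0 : 0 ≤ T := tsum_nonneg fun i => sq_nonneg _
    have hnorm : ‖u'‖ ≤ Real.sqrt B * Real.sqrt T := by
      refine ContinuousLinearMap.opNorm_le_bound _ (by positivity) fun x => ?_
      have hux : u' x = ∑' i, f i v * f i x := by
        conv_lhs => rw [← hright u']
        exact (hev v x).tsum_eq.symm
      have hcs := (tsum_cs (fun i => f i v) (fun i => f i x) (hsum v) (hsum x)).2
      have hbx : Real.sqrt (∑' i, (f i x) ^ 2) ≤ Real.sqrt B * ‖x‖ := by
        rw [show Real.sqrt B * ‖x‖ = Real.sqrt (B * ‖x‖ ^ 2) by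
          rw [Real.sqrt_mul hB.le, Real.sqrt_sq (norm_nonneg x)]]
        exact Real.sqrt_le_sqrt (hup x)
      calc ‖u' x‖ = |∑' i, f i v * f i x| := by rw [hux]; exact Real.norm_eq_abs _
        _ ≤ Real.sqrt T * Real.sqrt (∑' i, (f i x) ^ 2) := hcs
        _ ≤ Real.sqrt T * (Real.sqrt B * ‖x‖) := by
            exact mul_le_mul_of_nonneg_left hbx (Real.sqrt_nonneg _)
        _ = Real.sqrt B * Real.sqrt T * ‖x‖ := by ring
    have hsq : ‖u'‖ ^ 2 ≤ B * T := by
      have := mul_self_le_mul_self (norm_nonneg u') hnorm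
      calc ‖u'‖ ^ 2 = ‖u'‖ * ‖u'‖ := sq _
        _ ≤ (Real.sqrt B * Real.sqrt T) * (Real.sqrt B * Real.sqrt T) := this
        _ = (Real.sqrt B * Real.sqrt B) * (Real.sqrt T * Real.sqrt T) := by ring
        _ = B * T := by rw [Real.mul_self_sqrt hB.le, Real.mul_self_sqrt hT0]
    rw [div_mul_eq_mul_div, div_le_iff₀ hB]
    linarith
  · -- upper bound
    set T := ∑' i, (f i v) ^ 2 with hT
    have h1 : A * ‖v‖ ^ 2 ≤ T := hlow v
    have h2 : T ≤ ‖u'‖ * ‖v‖ := by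
      rw [← hu'v]
      calc u' v ≤ |u' v| := le_abs_self _
        _ ≤ ‖u'‖ * ‖v‖ := u'.le_opNorm v
    rw [div_mul_eq_mul_div, le_div_iff₀ hA]
    nlinarith [sq_nonneg (‖u'‖ - A * ‖v‖), norm_nonneg v, norm_nonneg u']
end

section
/- Let (f_i)_{i∈I} be an ℓ²-frame for a real Banach space X with frame operator S (bijective with bounded inverse S⁻¹), analysis operator T* and synthesis operator T. Then the bounded operator G := T* ∘ S⁻¹ ∘ T on ℓ²(I) satisfies ⟨Gα, α⟩_{ℓ²} = ‖Gα‖²_{ℓ²} for all α ∈ ℓ²(I), and the range of G equals the range of T*; consequently G is the orthogonal projection of ℓ²(I) onto the range of T*. -/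
set_option maxHeartbeats 1000000


open scoped RealInnerProductSpace

/-- With analysis operator `T*`, synthesis operator `T` and frame operator
`S = T ∘ T*` (bijective with bounded inverse `Sinv`), the bounded operator
`G := T* ∘ Sinv ∘ T` on `ℓ²(I)` satisfies `⟪G α, α⟫ = ‖G α‖²` for all `α`, and
`range G = range T*`; consequently `G` is the orthogonal projection of `ℓ²(I)` onto
`range T*` (idempotent and self-adjoint). -/
theorem stmt6 {X : Type*} [NormedAddCommGroup X] [NormedSpace ℝ X] [CompleteSpace X]
    {I : Type*} [Countable I] (f : I → StrongDual ℝ X) (A B : ℝ)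
    (hA : 0 < A) (hAB : A ≤ B)
    (hsum : ∀ v : X, Summable fun i => (f i v) ^ 2)
    (hlow : ∀ v : X, A * ‖v‖ ^ 2 ≤ ∑' i, (f i v) ^ 2)
    (hup : ∀ v : X, ∑' i, (f i v) ^ 2 ≤ B * ‖v‖ ^ 2)
    (Tstar : X →L[ℝ] lp (fun _ : I => ℝ) 2)
    (hTstar : ∀ (v : X) (i : I), Tstar v i = f i v)
    (T : lp (fun _ : I => ℝ) 2 →L[ℝ] StrongDual ℝ X)
    (hT : ∀ α : lp (fun _ : I => ℝ) 2, HasSum (fun i => α i • f i) (T α))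
    (S : X →L[ℝ] StrongDual ℝ X)
    (hS : ∀ v : X, S v = T (Tstar v))
    (Sinv : StrongDual ℝ X →L[ℝ] X)
    (hleft : ∀ v : X, Sinv (S v) = v)
    (hright : ∀ u' : StrongDual ℝ X, S (Sinv u') = u')
    (G : lp (fun _ : I => ℝ) 2 →L[ℝ] lp (fun _ : I => ℝ) 2)
    (hG : G = Tstar ∘L Sinv ∘L T) :
    (∀ α : lp (fun _ : I => ℝ) 2, ⟪G α, α⟫ = ‖G α‖ ^ 2) ∧
    Set.range G = Set.range Tstar ∧
    (∀ α : lp (fun _ : I => ℝ) 2, G (G α) = G α) ∧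
    (∀ α β : lp (fun _ : I => ℝ) 2, ⟪G α, β⟫ = ⟪α, G β⟫) := by
  -- Key: (T α) v = ⟪Tstar v, α⟫
  have key : ∀ (v : X) (α : lp (fun _ : I => ℝ) 2), (T α) v = ⟪Tstar v, α⟫ := by
    intro v α
    have h1 : HasSum (fun i => (α i • f i) v) ((T α) v) :=
      (hT α).mapL (NormedSpace.inclusionInDoubleDual ℝ X v)
    have h2 : HasSum (fun i => ⟪Tstar v i, α i⟫) ⟪Tstar v, α⟫ := lp.hasSum_inner _ _
    simp only [hTstar, RCLike.inner_apply, starRingEnd_apply, star_trivial] at h2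
    have : (fun i => (α i • f i) v) = fun i => f i v * α i := by
      funext i; simp [mul_comm]
    rw [this] at h1
    exact h1.unique (by simpa only [mul_comm] using h2)
  -- G applied
  have hGapp : ∀ α, G α = Tstar (Sinv (T α)) := by
    intro α; rw [hG]
    simp only [ContinuousLinearMap.comp_apply]
  -- idempotent
  have hidem : ∀ α, G (G α) = G α := by
    intro α
    rw [hGapp, hGapp α, ← hS, hleft]
  -- ⟪G α, β⟫ = ⟪G α, G β⟫
  have hsym : ∀ α β, ⟪G α, β⟫ = ⟪G α, G β⟫ := by
    intro α β
    have : ⟪G α, β⟫ = (T β) (Sinv (T α)) := by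
      rw [hGapp, key]
    rw [this, ← hright (T β), hS, key, real_inner_comm, ← hGapp, ← hGapp]
    exact real_inner_comm _ _
  have hinner : ∀ α, ⟪G α, α⟫ = ‖G α‖ ^ 2 := by
    intro α
    rw [hsym α α, real_inner_self_eq_norm_sq]
  refine ⟨hinner, ?_, hidem, ?_⟩
  · ext β
    constructor
    · rintro ⟨α, rfl⟩
      exact ⟨Sinv (T α), (hGapp α).symm⟩
    · rintro ⟨v, rfl⟩
      refine ⟨Tstar v, ?_⟩
      rw [hGapp, ← hS, hleft]
  · intro α β
    calc ⟪G α, β⟫ = ⟪G α, G β⟫ := hsym α β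
      _ = ⟪G β, G α⟫ := real_inner_comm _ _
      _ = ⟪G β, α⟫ := (hsym β α).symm
      _ = ⟪α, G β⟫ := real_inner_comm _ _
end

section
/- Let (f_i)_{i∈I} be an ℓ²-frame for a real Banach space X with frame operator S (bijective with bounded inverse S⁻¹), and suppose there exists a biorthogonal family (g_j)_{j∈I} ⊂ X, i.e., f_i(g_j) = δ_{i,j} for all i, j ∈ I. Then S g_j = f_j for every j ∈ I, hence g_j = S⁻¹f_j, and consequently f_i(S⁻¹f_j) = δ_{i,j} and (S g_i)(g_j) = δ_{i,j} for all i, j ∈ I; that is, (f_i) and (g_i) are orthonormal with respect to the inner products ⟨u',v'⟩_{X'} := u'(S⁻¹v') on X' and ⟨u,v⟩_X := (Su)(v) on X, respectively. -/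
/-- Let `(f i)` be an ℓ²-frame of `X` with frame operator `S` (bijective with
bounded inverse `Sinv`) and suppose `(g j) ⊂ X` is biorthogonal, i.e. `f i (g j) = δᵢⱼ`.
Then `S (g j) = f j`, hence `g j = Sinv (f j)`, and consequently
`f i (Sinv (f j)) = δᵢⱼ` and `(S (g i)) (g j) = δᵢⱼ`; i.e. `(f i)` and `(g i)` are
orthonormal w.r.t. the inner products `⟨u',v'⟩ = u'(Sinv v')` on `X'` and
`⟨u,v⟩ = (S u) v` on `X`, respectively. -/
theorem stmt7 {X : Type*} [NormedAddCommGroup X] [NormedSpace ℝ X] [CompleteSpace X]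
    {I : Type*} [Countable I] [DecidableEq I]
    (f : I → StrongDual ℝ X) (A B : ℝ)
    (hA : 0 < A) (hAB : A ≤ B)
    (hsum : ∀ v : X, Summable fun i => (f i v) ^ 2)
    (hlow : ∀ v : X, A * ‖v‖ ^ 2 ≤ ∑' i, (f i v) ^ 2)
    (hup : ∀ v : X, ∑' i, (f i v) ^ 2 ≤ B * ‖v‖ ^ 2)
    (S : X →L[ℝ] StrongDual ℝ X)
    (hS : ∀ v : X, HasSum (fun i => f i v • f i) (S v))
    (Sinv : StrongDual ℝ X →L[ℝ] X)
    (hleft : ∀ v : X, Sinv (S v) = v)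
    (hright : ∀ u' : StrongDual ℝ X, S (Sinv u') = u')
    (g : I → X) (hbi : ∀ i j : I, f i (g j) = if i = j then 1 else 0) :
    (∀ j : I, S (g j) = f j) ∧
    (∀ j : I, g j = Sinv (f j)) ∧
    (∀ i j : I, f i (Sinv (f j)) = if i = j then 1 else 0) ∧
    (∀ i j : I, S (g i) (g j) = if i = j then 1 else 0) := by
  have hSg : ∀ j : I, S (g j) = f j := by
    intro j
    refine (hS (g j)).unique ?_
    have : (fun i => f i (g j) • f i) = fun i => if i = j then f j else 0 := by
      funext i
      by_cases h : i = j <;> simp [hbi, h]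
    rw [this]
    exact hasSum_ite_eq j (f j)
  have hg : ∀ j : I, g j = Sinv (f j) := fun j => by rw [← hSg j, hleft]
  refine ⟨hSg, hg, fun i j => by rw [← hg j]; exact hbi i j,
    fun i j => by rw [hSg i]; exact hbi i j⟩
end

section
/- Let (f_i)_{i∈I} be an ℓ²-frame for a real Banach space X with analysis operator T*, frame operator S (bijective with bounded inverse S⁻¹), and let U be a bounded linear operator on ℓ²(I) such that U*(Uα) = α for every α in the range of T* (an isometry on the range of T*). For k ∈ I define ψ_k ∈ X' by ψ_k(v) := (U T* v)_k and ψ̃_k := S⁻¹ψ_k ∈ X. Then the family (ψ_k)_{k∈I} has the same frame operator as (f_i), i.e., Σ_{k∈I} ψ_k(u)ψ_k(v) = (Su)(v) for all u, v ∈ X, and the reconstruction formula v = Σ_{k∈I} ψ_k(v)·ψ̃_k holds for every v ∈ X with convergence in the norm of X; in particular (ψ_k) and (ψ̃_k) are dual frames. -/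
set_option maxHeartbeats 1000000
open InnerProductSpace


/-- Let `(f i)` be an ℓ²-frame of `X` with analysis operator `T*`, frame
operator `S` (bijective with bounded inverse `Sinv`), and let `U` be a bounded operator on
`ℓ²(I)` with `U* (U α) = α` for all `α ∈ range T*` (an isometry on the range of `T*`).
Define `ψ k ∈ X'` by `ψ k v = (U (T* v)) k` and `ψ̃ k = Sinv (ψ k) ∈ X`. Then `(ψ k)` has
the same frame operator as `(f i)`, i.e. `∑ k, ψ k u · ψ k v = (S u) v`, and the
reconstruction `v = ∑ k, ψ k v • ψ̃ k` holds in `X`; in particular `(ψ k)` and `(ψ̃ k)`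
are dual frames. -/
theorem stmt8 {X : Type*} [NormedAddCommGroup X] [NormedSpace ℝ X] [CompleteSpace X]
    {I : Type*} [Countable I] (f : I → StrongDual ℝ X) (A B : ℝ)
    (hA : 0 < A) (hAB : A ≤ B)
    (hsum : ∀ v : X, Summable fun i => (f i v) ^ 2)
    (hlow : ∀ v : X, A * ‖v‖ ^ 2 ≤ ∑' i, (f i v) ^ 2)
    (hup : ∀ v : X, ∑' i, (f i v) ^ 2 ≤ B * ‖v‖ ^ 2)
    (Tstar : X →L[ℝ] lp (fun _ : I => ℝ) 2)
    (hTstar : ∀ (v : X) (i : I), Tstar v i = f i v)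
    (S : X →L[ℝ] StrongDual ℝ X)
    (hS : ∀ v : X, HasSum (fun i => f i v • f i) (S v))
    (Sinv : StrongDual ℝ X →L[ℝ] X)
    (hleft : ∀ v : X, Sinv (S v) = v)
    (hright : ∀ u' : StrongDual ℝ X, S (Sinv u') = u')
    (U : lp (fun _ : I => ℝ) 2 →L[ℝ] lp (fun _ : I => ℝ) 2)
    (hU : ∀ α ∈ Set.range Tstar, ContinuousLinearMap.adjoint U (U α) = α)
    (ψ : I → StrongDual ℝ X)
    (hψ : ∀ (k : I) (v : X), ψ k v = U (Tstar v) k) :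
    (∀ u v : X, HasSum (fun k => ψ k u * ψ k v) (S u v)) ∧
    (∀ v : X, HasSum (fun k => ψ k v • Sinv (ψ k)) v) := by
  classical
  -- evaluation of hS
  have hSapp : ∀ u v : X, HasSum (fun i => f i u * f i v) (S u v) := by
    intro u v
    have h := (hS u).mapL (ContinuousLinearMap.apply ℝ ℝ v)
    simpa [ContinuousLinearMap.smul_apply, smul_eq_mul] using h
  -- inner products
  have hinnerT : ∀ u v : X, (inner ℝ (Tstar u) (Tstar v) : ℝ) = S u v := by
    intro u v
    have h1 : HasSum (fun i => Tstar u i * Tstar v i) (inner ℝ (Tstar u) (Tstar v) : ℝ) := by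
      simpa [RCLike.inner_apply, starRingEnd_apply, mul_comm] using
        lp.hasSum_inner (𝕜 := ℝ) (Tstar u) (Tstar v)
    have h2 : HasSum (fun i => Tstar u i * Tstar v i) (S u v) := by
      simpa [hTstar] using hSapp u v
    exact h1.unique h2
  have hinnerU : ∀ u v : X, (inner ℝ (U (Tstar u)) (U (Tstar v)) : ℝ) = S u v := by
    intro u v
    rw [← ContinuousLinearMap.adjoint_inner_left, hU _ ⟨u, rfl⟩]
    exact hinnerT u v
  have part1 : ∀ u v : X, HasSum (fun k => ψ k u * ψ k v) (S u v) := by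
    intro u v
    have h1 : HasSum (fun k => U (Tstar u) k * U (Tstar v) k)
        (inner ℝ (U (Tstar u)) (U (Tstar v)) : ℝ) := by
      simpa [RCLike.inner_apply, starRingEnd_apply, mul_comm] using
        lp.hasSum_inner (𝕜 := ℝ) (U (Tstar u)) (U (Tstar v))
    rw [← hinnerU u v]
    simpa [hψ] using h1
  refine ⟨part1, ?_⟩
  -- the synthesis-type map
  set g : X →L[ℝ] lp (fun _ : I => ℝ) 2 := U.comp Tstar with hg
  have hgB : ∀ a : lp (fun _ : I => ℝ) 2, ∀ u : X,
      |(inner ℝ a (g u) : ℝ)| ≤ (‖g‖ * ‖a‖) * ‖u‖ := by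
    intro a u
    calc |(inner ℝ a (g u) : ℝ)| ≤ ‖a‖ * ‖g u‖ := abs_real_inner_le_norm a (g u)
    _ ≤ ‖a‖ * (‖g‖ * ‖u‖) := by
        exact mul_le_mul_of_nonneg_left (g.le_opNorm u) (norm_nonneg a)
    _ = (‖g‖ * ‖a‖) * ‖u‖ := by ring
  let Φ₀ : lp (fun _ : I => ℝ) 2 →ₗ[ℝ] (X →L[ℝ] ℝ) :=
    { toFun := fun a => LinearMap.mkContinuous
        { toFun := fun u => (inner ℝ a (g u) : ℝ)
          map_add' := by intro x y; simp [inner_add_right]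
          map_smul' := by intro c x; simp [inner_smul_right] }
        (‖g‖ * ‖a‖) (by intro u; simpa using hgB a u)
      map_add' := by
        intro a b; ext u; simp [inner_add_left, LinearMap.mkContinuous_apply]
      map_smul' := by
        intro c a; ext u
        simp [LinearMap.mkContinuous_apply, real_inner_smul_left] }
  have hΦ₀ : ∀ a u, Φ₀ a u = (inner ℝ a (g u) : ℝ) := fun a u => rfl
  have Φcont : ∀ a, ‖Φ₀ a‖ ≤ ‖g‖ * ‖a‖ := by
    intro a
    apply ContinuousLinearMap.opNorm_le_bound _ (by positivity)
    intro u; simpa [hΦ₀] using hgB a u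
  let Φ : lp (fun _ : I => ℝ) 2 →L[ℝ] (X →L[ℝ] ℝ) :=
    LinearMap.mkContinuous Φ₀ ‖g‖ (fun a => by simpa [mul_comm] using Φcont a)
  intro v
  -- HasSum of singles
  have hsingle : HasSum (fun k => lp.single 2 k (g v k)) (g v) :=
    lp.hasSum_single (by norm_num) (g v)
  have hmap : HasSum (fun k => Φ (lp.single 2 k (g v k))) (Φ (g v)) :=
    hsingle.mapL Φ
  have hΦsingle : ∀ (k : I) (c : ℝ), Φ (lp.single 2 k c) = c • ψ k := by
    intro k c
    ext u
    have : (inner ℝ (lp.single 2 k c) (g u) : ℝ) = c * g u k := by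
      simpa [RCLike.inner_apply, starRingEnd_apply, mul_comm] using
        lp.inner_single_left (𝕜 := ℝ) k c (g u)
    show Φ₀ (lp.single 2 k c) u = (c • ψ k) u
    rw [hΦ₀, this]
    simp [hψ, hg]
  have hΦgv : Φ (g v) = S v := by
    ext u
    show Φ₀ (g v) u = S v u
    rw [hΦ₀]
    exact hinnerU v u
  have hsum2 : HasSum (fun k => ψ k v • ψ k) (S v) := by
    rw [← hΦgv]
    convert hmap using 2 with k
    rw [hΦsingle]
    simp [hψ, hg]
  have := hsum2.mapL Sinv
  simpa [hleft v] using this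
end
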